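/- For δ ∈ (0,1), c > 0, and initial condition x ≠ 0 in R^d, the function μ(t;x) = [|x|^{2(1−δ)} − 2c·δ(1−δ)t]^{1/(2(1−δ))} · n(x) · 1{|x|^{2(1−δ)} ≥ 2c·δ(1−δ)t} is the Carathéodory solution of the initial value problem μ̇ = −c·δ·|μ|^{−(1−2δ)} n(μ), μ(0) = x, and it reaches 0 at time T_x = |x|^{2(1−δ)}/(2cδ(1−δ)). -/

import Mathlib

/-- For `δ ∈ (0,1)`, `c > 0` and `x ≠ 0`, the function
`μ(t) = [|x|^{2(1−δ)} − 2cδ(1−δ)t]^{1/(2(1−δ))} n(x) 1{|x|^{2(1−δ)} ≥ 2cδ(1−δ)t}`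
is the Carathéodory solution of `μ̇ = −cδ|μ|^{−(1−2δ)} n(μ)`, `μ(0) = x`: it starts at
`x`, is continuous, solves the ODE classically before the hitting time
`T_x = |x|^{2(1−δ)}/(2cδ(1−δ))` and vanishes from `T_x` on. -/
theorem stmt13 (d : ℕ) (c δ : ℝ) (hc : 0 < c) (hδ0 : 0 < δ) (hδ1 : δ < 1)
    (x : EuclideanSpace ℝ (Fin d)) (hx : x ≠ 0)
    (μ : ℝ → EuclideanSpace ℝ (Fin d))
    (hμ : ∀ t, μ t =
      if 2 * c * δ * (1 - δ) * t ≤ ‖x‖ ^ (2 * (1 - δ)) then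
        (((‖x‖ ^ (2 * (1 - δ)) - 2 * c * δ * (1 - δ) * t) ^ (1 / (2 * (1 - δ)))) / ‖x‖) • x
      else 0) :
    μ 0 = x ∧ Continuous μ ∧
      (∀ t, 0 ≤ t → t < ‖x‖ ^ (2 * (1 - δ)) / (2 * c * δ * (1 - δ)) →
        HasDerivAt μ (-((c * δ * ‖μ t‖ ^ (-(1 - 2 * δ)) / ‖μ t‖) • μ t)) t) ∧
      (∀ t, ‖x‖ ^ (2 * (1 - δ)) / (2 * c * δ * (1 - δ)) ≤ t → μ t = 0) := by
  have hnx : (0:ℝ) < ‖x‖ := norm_pos_iff.mpr hx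
  have h1δ : (0:ℝ) < 1 - δ := by linarith
  set a : ℝ := 2 * c * δ * (1 - δ) with ha_def
  have ha : 0 < a := by
    have : (0:ℝ) < 2 * c * δ := by positivity
    exact mul_pos this h1δ
  set A : ℝ := ‖x‖ ^ (2 * (1 - δ)) with hA_def
  have hA : 0 < A := Real.rpow_pos_of_pos hnx _
  set p : ℝ := 1 / (2 * (1 - δ)) with hp_def
  have h2δ : (0:ℝ) < 2 * (1 - δ) := by linarith
  have hp : 0 < p := div_pos one_pos h2δ
  have hAp : A ^ p = ‖x‖ := by
    rw [hA_def, hp_def, ← Real.rpow_mul (norm_nonneg x), mul_one_div, div_self h2δ.ne',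
      Real.rpow_one]
  -- part 1
  have h0 : μ 0 = x := by
    rw [hμ 0, if_pos (by simpa using hA.le)]
    simp [hAp, div_self hnx.ne']
  refine ⟨h0, ?_, ?_, ?_⟩
  · -- continuity
    have hfun : μ = fun t => ((max (A - a * t) 0) ^ p / ‖x‖) • x := by
      funext t
      rw [hμ t]
      split_ifs with h
      · rw [max_eq_left (by linarith)]
      · rw [max_eq_right (by push_neg at h; linarith), Real.zero_rpow hp.ne',
          zero_div, zero_smul]
    rw [hfun]
    exact (((((continuous_const.sub (continuous_const.mul continuous_id)).max
      continuous_const).rpow_const (fun t => Or.inr hp.le)).div_const _).smul continuous_const)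
  · -- derivative
    intro t ht0 ht
    have halt : a * t < A := by
      rw [lt_div_iff₀ ha] at ht
      linarith [ht]
    have hr0 : 0 < A - a * t := by linarith
    set r : ℝ := (A - a * t) ^ p with hr_def
    have hr : 0 < r := Real.rpow_pos_of_pos hr0 _
    have hμt : μ t = (r / ‖x‖) • x := by rw [hμ t, if_pos halt.le]
    have hnμt : ‖μ t‖ = r := by
      rw [hμt, norm_smul, Real.norm_eq_abs, abs_of_pos (div_pos hr hnx), div_mul_cancel₀ _ hnx.ne']
    -- local expression
    have heq : μ =ᶠ[nhds t] fun s => ((A - a * s) ^ p / ‖x‖) • x := by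
      have hopen : IsOpen {s : ℝ | a * s < A} :=
        isOpen_lt (continuous_const.mul continuous_id) continuous_const
      filter_upwards [hopen.mem_nhds halt] with s hs
      rw [hμ s, if_pos hs.le]
    have hd1 : HasDerivAt (fun s : ℝ => A - a * s) (-a) t := by
      simpa using ((hasDerivAt_id t).const_mul a).const_sub A
    have hd2 : HasDerivAt (fun s : ℝ => (A - a * s) ^ p)
        (-a * p * (A - a * t) ^ (p - 1)) t :=
      hd1.rpow_const (Or.inl hr0.ne')
    have hd4 : HasDerivAt (fun s : ℝ => ((A - a * s) ^ p / ‖x‖) • x)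
        ((-a * p * (A - a * t) ^ (p - 1) / ‖x‖) • x) t :=
      (hd2.div_const _).smul_const x
    have hd5 : HasDerivAt μ ((-a * p * (A - a * t) ^ (p - 1) / ‖x‖) • x) t :=
      hd4.congr_of_eventuallyEq heq
    convert hd5 using 1
    rw [hnμt, hμt, smul_smul, ← neg_smul]
    congr 1
    have hexp : r ^ (-(1 - 2 * δ)) = (A - a * t) ^ (p - 1) := by
      rw [hr_def, ← Real.rpow_mul hr0.le]
      congr 1
      rw [hp_def]
      field_simp
      ring
    rw [hexp]
    have hap : a * p = c * δ := by
      rw [ha_def, hp_def]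
      field_simp
    rw [← hap]
    field_simp [hr.ne']
  · -- vanishing
    intro t ht
    rw [div_le_iff₀ ha] at ht
    rw [hμ t]
    split_ifs with h
    · have : A - a * t = 0 := by linarith [ht]
      rw [this, Real.zero_rpow hp.ne', zero_div, zero_smul]
    · rfl
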